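/- If X is a primitive string and X occurs in the square X·X at position k (1-indexed), then k = 1 or k = |X| + 1; i.e., a primitive string has no internal occurrence in its own square. -/

import Mathlib

/-- `S` occurs in `T` at (0-indexed) position `i`. -/
def occursAt {α : Type*} (T S : List α) (i : ℕ) : Prop :=
  (T.drop i).take S.length = S

/-- `V` is primitive: it is not a proper power. -/
def Primitive {α : Type*} (V : List α) : Prop :=
  ∀ (U : List α) (d : ℕ), 0 < d → V = (List.replicate d U).flatten → d = 1

/-- `p` is a period of `F`. -/
def IsPeriod {α : Type*} (F : List α) (p : ℕ) : Prop :=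
  1 ≤ p ∧ ∀ k, k + p < F.length → F[k]? = F[k + p]?

/-- `p` is the smallest period of `F`. -/
def MinPeriod {α : Type*} (F : List α) (p : ℕ) : Prop :=
  IsPeriod F p ∧ ∀ q, IsPeriod F q → p ≤ q

/-- `(a,b,p)` is a run in `T` (0-indexed, positions `a..b` inclusive). -/
def IsRun {α : Type*} (T : List α) (a b p : ℕ) : Prop :=
  a ≤ b ∧ b < T.length ∧
  MinPeriod ((T.drop a).take (b - a + 1)) p ∧
  2 * p ≤ b - a + 1 ∧
  (a = 0 ∨ T[a - 1]? ≠ T[a - 1 + p]?) ∧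
  (b + 1 = T.length ∨ T[b + 1]? ≠ T[b + 1 - p]?)

/-- `(i,j)` is a consecutive occurrence of `S` in `T`. -/
def ConsOcc {α : Type*} (T S : List α) (i j : ℕ) : Prop :=
  i < j ∧ occursAt T S i ∧ occursAt T S j ∧ ∀ k, i < k → k < j → ¬ occursAt T S k

/-- Overlapping consecutive occurrences of `S` in `T`. -/
def OvOcc {α : Type*} (T S : List α) : Set (ℕ × ℕ) :=
  {q | ConsOcc T S q.1 q.2 ∧ q.2 < q.1 + S.length}

/-- Non-overlapping consecutive occurrences of `S` in `T`. -/
def NovOcc {α : Type*} (T S : List α) : Set (ℕ × ℕ) :=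
  {q | ConsOcc T S q.1 q.2 ∧ q.1 + S.length ≤ q.2}

/-- Positions of `T` covered by occurrences of `S`. -/
def Covered {α : Type*} (T S : List α) : Set ℕ :=
  {k | ∃ i, occursAt T S i ∧ i ≤ k ∧ k < i + S.length}

/-- Number of positions of `T` covered by occurrences of `S`. -/
noncomputable def Cov {α : Type*} (T S : List α) : ℕ := (Covered T S).ncard

/-- Number of occurrences of `S` in `T`. -/
noncomputable def Occ {α : Type*} (T S : List α) : ℕ := {i | occursAt T S i}.ncard

/-- One plus the number of non-overlapping consecutive occurrences. -/
noncomputable def nov {α : Type*} (T S : List α) : ℕ := 1 + (NovOcc T S).ncard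

/-- `S` is right-branching in `T` (end of text acts as a special end marker `none`). -/
def RightBranching {α : Type*} (T S : List α) : Prop :=
  ∃ i j, occursAt T S i ∧ occursAt T S j ∧ T[i + S.length]? ≠ T[j + S.length]?

private lemma rotate_iterate {α : Type*} (l : List α) (m : ℕ) :
    (fun t : List α => t.rotate 1)^[m] l = l.rotate m := by
  induction m with
  | zero => simp
  | succ n ih =>
      rw [Function.iterate_succ_apply', ih, List.rotate_rotate]

private lemma rot_pow {α : Type*} : ∀ (d : ℕ) (g : ℕ) (l : List α), 0 < g →
    l.length = d * g → l.rotate g = l → l = (List.replicate d (l.take g)).flatten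
  | 0, g, l, _, hlen, _ => by
      simp at hlen ⊢
      exact hlen
  | d + 1, g, l, hg, hlen, hrot => by
      have hgle : g ≤ l.length := by
        rw [hlen]; nlinarith
      have hrot' : l.drop g ++ l.take g = l := by
        rw [← List.rotate_eq_drop_append_take hgle]; exact hrot
      have htd : l.take g ++ l.drop g = l := List.take_append_drop g l
      set u := l.take g with hu
      set v := l.drop g with hv
      have hcomm : u ++ v = v ++ u := by rw [hrot', htd]
      have hulen : u.length = g := by
        rw [hu, List.length_take]; omega
      have hvlen : v.length = d * g := by
        rw [hv, List.length_drop, hlen]; ring_nf; omega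
      rcases Nat.eq_zero_or_pos d with hd | hd
      · subst hd
        have : v = [] := List.length_eq_zero_iff.mp (by simp [hvlen])
        rw [← htd, this]
        simp
      · have hgv : g ≤ v.length := by rw [hvlen]; nlinarith
        have htakev : v.take g = u := by
          have h1 : (v ++ u).take g = v.take g := by
            rw [List.take_append_of_le_length hgv]
          have h2 : (u ++ v).take g = u := by
            rw [List.take_append_of_le_length (le_of_eq hulen.symm), ← hulen,
              List.take_length]
          rw [← h1, ← hcomm, h2]
        have hdropv : v.drop g ++ u = v := by
          have h1 : (v ++ u).drop g = v.drop g ++ u := by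
            rw [List.drop_append_of_le_length hgv]
          have h2 : (u ++ v).drop g = v := by
            rw [← hulen, List.drop_left]
          rw [← h1, ← hcomm, h2]
        have hrotv : v.rotate g = v := by
          rw [List.rotate_eq_drop_append_take hgv, htakev, hdropv]
        have ih := rot_pow d g v hg hvlen hrotv
        rw [htakev] at ih
        calc l = u ++ v := htd.symm
          _ = u ++ (List.replicate d u).flatten := by rw [← ih]
          _ = (List.replicate (d + 1) u).flatten := by
              rw [List.replicate_succ, List.flatten_cons]

theorem stmt4 {α : Type*} (X : List α) (hX : Primitive X) (k : ℕ)
    (hocc : occursAt (X ++ X) X k) :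
    k = 0 ∨ k = X.length := by
  by_contra hcon
  push_neg at hcon
  obtain ⟨hk0, hkn⟩ := hcon
  set n := X.length with hn
  have hnpos : 0 < n := by
    rcases Nat.eq_zero_or_pos n with h | h
    · have hXnil : X = [] := List.length_eq_zero_iff.mp h
      have := hX [] 2 (by norm_num) (by simp [hXnil])
      norm_num at this
    · exact h
  -- k ≤ n
  have hklen : k ≤ n := by
    by_contra hgt
    push_neg at hgt
    have hlen := congrArg List.length hocc
    simp [List.length_take, List.length_drop] at hlen
    omega
  have hkltn : k < n := lt_of_le_of_ne hklen hkn
  -- X.rotate k = X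
  have hrotk : X.rotate k = X := by
    have hdrop : (X ++ X).drop k = X.drop k ++ X := by
      rw [List.drop_append_of_le_length (by omega)]
    have : ((X ++ X).drop k).take n = X.drop k ++ X.take (n - (n - k)) := by
      rw [hdrop, List.take_append, List.length_drop,
        List.take_of_length_le (by simp [List.length_drop]; omega)]
    rw [List.rotate_eq_drop_append_take (le_of_lt hkltn)]
    have hnk : n - (n - k) = k := by omega
    rw [hnk] at this
    rw [← this]
    exact hocc
  -- periodic points
  have hpk : Function.IsPeriodicPt (fun t : List α => t.rotate 1) k X := by
    unfold Function.IsPeriodicPt Function.IsFixedPt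
    rw [rotate_iterate]; exact hrotk
  have hpn : Function.IsPeriodicPt (fun t : List α => t.rotate 1) n X := by
    unfold Function.IsPeriodicPt Function.IsFixedPt
    rw [rotate_iterate]; exact X.rotate_length
  have hpg := hpk.gcd hpn
  set g := Nat.gcd k n with hg
  have hrotg : X.rotate g = X := by
    have := hpg
    unfold Function.IsPeriodicPt Function.IsFixedPt at this
    rwa [rotate_iterate] at this
  have hgpos : 0 < g := Nat.gcd_pos_of_pos_left n (by omega)
  have hgdvd : g ∣ n := Nat.gcd_dvd_right k n
  obtain ⟨d, hd⟩ := hgdvd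
  have hglek : g ≤ k := Nat.le_of_dvd (by omega) (Nat.gcd_dvd_left k n)
  have hd2 : 2 ≤ d := by nlinarith
  have hXeq := rot_pow d g X hgpos (by rw [← hn, hd, Nat.mul_comm]) hrotg
  have := hX (X.take g) d (by omega) hXeq
  omega
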